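/- Let g : ℝ^d → [0,∞) be a polynomial satisfying the homogeneity property g(Σ_{k=1}^p t^{1/(2k)} p_{A_k}(h)) = t·g(h) for all t ≥ 0 and h ∈ ℝ^d, where ℝ^d = A_1 ⊕ ⋯ ⊕ A_p is an orthogonal decomposition with projections p_{A_k}. If g is coercive (g(h) → ∞ as ‖h‖ → ∞), then there exists R ≥ 1 such that g(h) ≥ ‖h‖/R for all h with ‖h‖ ≥ R; in particular e^{-g} ∈ L¹(ℝ^d). -/

import Mathlib

open MeasureTheory

private lemma pyth_aux {E : Type*} [NormedAddCommGroup E] [InnerProductSpace ℝ E]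
    {ι : Type*} [Fintype ι] (v : ι → E)
    (hv : ∀ i j, i ≠ j → (inner ℝ (v i) (v j) : ℝ) = 0) :
    ‖∑ i, v i‖ ^ 2 = ∑ i, ‖v i‖ ^ 2 := by
  have h : (inner ℝ (∑ i, v i) (∑ i, v i) : ℝ) = ∑ i, (inner ℝ (v i) (v i) : ℝ) := by
    rw [sum_inner]
    refine Finset.sum_congr rfl fun i _ => ?_
    rw [inner_sum, Finset.sum_eq_single i (fun j _ hj => hv i j hj.symm) (by simp)]
  simpa [real_inner_self_eq_norm_sq] using h

private lemma pow_le_factorial_mul_exp (x : ℝ) (hx : 0 ≤ x) (n : ℕ) :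
    x ^ n ≤ (n.factorial : ℝ) * Real.exp x := by
  have h1 : x ^ n / (n.factorial : ℝ) ≤ Real.exp x := by
    refine le_trans ?_ (Real.sum_le_exp_of_nonneg hx (n + 1))
    refine Finset.single_le_sum (f := fun i => x ^ i / (i.factorial : ℝ)) ?_ ?_
    · intro i _; positivity
    · simp
  have hfac : (0 : ℝ) < (n.factorial : ℝ) := by exact_mod_cast n.factorial_pos
  calc x ^ n = (x ^ n / (n.factorial : ℝ)) * (n.factorial : ℝ) := by field_simp
    _ ≤ Real.exp x * (n.factorial : ℝ) := by
        exact mul_le_mul_of_nonneg_right h1 hfac.le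
    _ = (n.factorial : ℝ) * Real.exp x := by ring

set_option maxHeartbeats 1000000 in
/-- A nonnegative coercive polynomial g with the weighted homogeneity
g(Σ_k t^{1/(2k)} p_{A_k}(h)) = t g(h) (for an orthogonal decomposition
ℝ^d = A₁ ⊕ ⋯ ⊕ A_p) satisfies a linear lower bound g(h) ≥ ‖h‖/R outside a ball,
and in particular e^{-g} is integrable. -/
theorem stmt15 (d p : ℕ) (g : EuclideanSpace ℝ (Fin d) → ℝ)
    (A : Fin p → Submodule ℝ (EuclideanSpace ℝ (Fin d)))
    (horth : ∀ i j, i ≠ j → ∀ u ∈ A i, ∀ v ∈ A j, (inner ℝ u v : ℝ) = 0)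
    (hdecomp : ∀ h : EuclideanSpace ℝ (Fin d),
      (∑ k, ((A k).orthogonalProjectionOnto h : EuclideanSpace ℝ (Fin d))) = h)
    (hpoly : ∃ P : MvPolynomial (Fin d) ℝ,
      ∀ y : EuclideanSpace ℝ (Fin d), g y = MvPolynomial.eval (fun i => y i) P)
    (hnonneg : ∀ h, 0 ≤ g h)
    (hhom : ∀ t : ℝ, 0 ≤ t → ∀ h : EuclideanSpace ℝ (Fin d),
      g (∑ k : Fin p, t ^ ((1:ℝ) / ((2 * ((k : ℕ) + 1) : ℕ) : ℝ)) •
        ((A k).orthogonalProjectionOnto h : EuclideanSpace ℝ (Fin d))) = t * g h)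
    (hcoercive : ∀ C : ℝ, ∃ R : ℝ, ∀ h : EuclideanSpace ℝ (Fin d), R ≤ ‖h‖ → C ≤ g h) :
    (∃ R : ℝ, 1 ≤ R ∧ ∀ h : EuclideanSpace ℝ (Fin d), R ≤ ‖h‖ → ‖h‖ / R ≤ g h) ∧
    Integrable (fun h : EuclideanSpace ℝ (Fin d) => Real.exp (-g h)) := by
  classical
  obtain ⟨R₀, hR₀⟩ := hcoercive 1
  set R : ℝ := max 1 R₀ with hRdef
  have hR1 : (1:ℝ) ≤ R := le_max_left _ _
  have hRpos : (0:ℝ) < R := lt_of_lt_of_le one_pos hR1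
  -- the key linear lower bound
  have key : ∀ h : EuclideanSpace ℝ (Fin d), R ≤ ‖h‖ → ‖h‖ / R ≤ g h := by
    intro h hh
    have hhpos : (0:ℝ) < ‖h‖ := lt_of_lt_of_le hRpos hh
    set t : ℝ := ‖h‖ / R with htdef
    have ht0 : (0:ℝ) < t := div_pos hhpos hRpos
    have ht1 : (1:ℝ) ≤ t := (one_le_div hRpos).2 hh
    have he_pos : ∀ k : Fin p, (0:ℝ) < (1:ℝ) / ((2 * ((k : ℕ) + 1) : ℕ) : ℝ) := by
      intro k
      have : (0:ℝ) < ((2 * ((k : ℕ) + 1) : ℕ) : ℝ) := by positivity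
      positivity
    have he_le : ∀ k : Fin p, (1:ℝ) / ((2 * ((k : ℕ) + 1) : ℕ) : ℝ) * 2 ≤ 1 := by
      intro k
      have h2 : (2:ℝ) ≤ ((2 * ((k : ℕ) + 1) : ℕ) : ℝ) := by
        have : (0:ℝ) ≤ ((k : ℕ) : ℝ) := Nat.cast_nonneg _
        push_cast
        nlinarith
      have := one_div_le_one_div_of_le (by norm_num : (0:ℝ) < 2) h2
      nlinarith
    set h' : EuclideanSpace ℝ (Fin d) :=
      ∑ k : Fin p, t ^ (-((1:ℝ) / ((2 * ((k : ℕ) + 1) : ℕ) : ℝ))) •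
        ((A k).orthogonalProjectionOnto h : EuclideanSpace ℝ (Fin d)) with hh'def
    -- projections of h'
    have hproj : ∀ j : Fin p,
        ((A j).orthogonalProjectionOnto h' : EuclideanSpace ℝ (Fin d)) =
          t ^ (-((1:ℝ) / ((2 * ((j : ℕ) + 1) : ℕ) : ℝ))) •
            ((A j).orthogonalProjectionOnto h : EuclideanSpace ℝ (Fin d)) := by
      intro j
      have hmem : ∀ k : Fin p, k ≠ j →
          ((A k).orthogonalProjectionOnto h : EuclideanSpace ℝ (Fin d)) ∈ (A j)ᗮ := by
        intro k hkj
        rw [Submodule.mem_orthogonal]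
        intro u hu
        exact horth j k hkj.symm u hu _ (SetLike.coe_mem _)
      have h1 : (A j).orthogonalProjectionOnto h' =
          t ^ (-((1:ℝ) / ((2 * ((j : ℕ) + 1) : ℕ) : ℝ))) • (A j).orthogonalProjectionOnto h := by
        rw [hh'def, map_sum]
        rw [Finset.sum_eq_single j]
        · rw [_root_.map_smul, Submodule.orthogonalProjectionOnto_mem_subspace_eq_self]
        · intro k _ hkj
          rw [_root_.map_smul,
            Submodule.orthogonalProjectionOnto_apply_of_mem_orthogonal (hmem k hkj),
            smul_zero]
        · simp
      rw [h1, Submodule.coe_smul]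
    -- pythagoras for h
    have hnh : ‖h‖ ^ 2 = ∑ k : Fin p,
        ‖((A k).orthogonalProjectionOnto h : EuclideanSpace ℝ (Fin d))‖ ^ 2 := by
      conv_lhs => rw [← hdecomp h]
      exact pyth_aux _ (fun i j hij =>
        horth i j hij _ (SetLike.coe_mem _) _ (SetLike.coe_mem _))
    -- pythagoras for h'
    have hnh' : ‖h'‖ ^ 2 = ∑ k : Fin p,
        (t ^ (-((1:ℝ) / ((2 * ((k : ℕ) + 1) : ℕ) : ℝ)))) ^ 2 *
          ‖((A k).orthogonalProjectionOnto h : EuclideanSpace ℝ (Fin d))‖ ^ 2 := by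
      rw [hh'def]
      rw [pyth_aux _ (fun i j hij => by
        rw [real_inner_smul_left, real_inner_smul_right,
          horth i j hij _ (SetLike.coe_mem _) _ (SetLike.coe_mem _), mul_zero, mul_zero])]
      refine Finset.sum_congr rfl fun k _ => ?_
      rw [norm_smul, mul_pow, Real.norm_eq_abs, sq_abs]
    -- lower bound on ‖h'‖²
    have hlow : t⁻¹ * ‖h‖ ^ 2 ≤ ‖h'‖ ^ 2 := by
      rw [hnh', hnh, Finset.mul_sum]
      refine Finset.sum_le_sum fun k _ => ?_
      have hsq : (t ^ (-((1:ℝ) / ((2 * ((k : ℕ) + 1) : ℕ) : ℝ)))) ^ 2 =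
          t ^ (-((1:ℝ) / ((2 * ((k : ℕ) + 1) : ℕ) : ℝ)) * 2) := by
        rw [← Real.rpow_natCast (t ^ (-((1:ℝ) / ((2 * ((k : ℕ) + 1) : ℕ) : ℝ)))) 2,
          ← Real.rpow_mul ht0.le]
        norm_num
      have hexp : t ^ (-1 : ℝ) ≤ t ^ (-((1:ℝ) / ((2 * ((k : ℕ) + 1) : ℕ) : ℝ)) * 2) := by
        refine Real.rpow_le_rpow_of_exponent_le ht1 ?_
        have := he_le k
        linarith
      have := Real.rpow_neg_one t
      rw [hsq]
      have hnn : (0:ℝ) ≤ ‖((A k).orthogonalProjectionOnto h : EuclideanSpace ℝ (Fin d))‖ ^ 2 := by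
        positivity
      calc t⁻¹ * ‖((A k).orthogonalProjectionOnto h : EuclideanSpace ℝ (Fin d))‖ ^ 2
          = t ^ (-1 : ℝ) * ‖((A k).orthogonalProjectionOnto h : EuclideanSpace ℝ (Fin d))‖ ^ 2 := by
            rw [Real.rpow_neg_one]
        _ ≤ _ := mul_le_mul_of_nonneg_right hexp hnn
    -- hence ‖h'‖ ≥ R
    have hRh' : R ≤ ‖h'‖ := by
      have h1 : R ^ 2 ≤ ‖h'‖ ^ 2 := by
        have h2 : t⁻¹ * ‖h‖ ^ 2 = R * ‖h‖ := by
          rw [htdef]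
          field_simp
        have h3 : R ^ 2 ≤ R * ‖h‖ := by nlinarith
        linarith
      exact (pow_le_pow_iff_left₀ hRpos.le (norm_nonneg _) two_ne_zero).1 h1
    have hgh' : 1 ≤ g h' := hR₀ h' (le_trans (le_max_right 1 R₀) hRh')
    -- homogeneity
    have hh2 : g h = t * g h' := by
      have := hhom t ht0.le h'
      rw [← this]
      congr 1
      conv_lhs => rw [← hdecomp h]
      refine Finset.sum_congr rfl fun k _ => ?_
      rw [hproj k, smul_smul, ← Real.rpow_add ht0, add_neg_cancel, Real.rpow_zero, one_smul]
    calc ‖h‖ / R = t := rfl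
      _ = t * 1 := (mul_one t).symm
      _ ≤ t * g h' := mul_le_mul_of_nonneg_left hgh' ht0.le
      _ = g h := hh2.symm
  refine ⟨⟨R, hR1, key⟩, ?_⟩
  -- continuity of g
  obtain ⟨P, hP⟩ := hpoly
  have hgcont : Continuous g := by
    have h1 : Continuous fun y : EuclideanSpace ℝ (Fin d) =>
        MvPolynomial.eval (fun i => y i) P :=
      (MvPolynomial.continuous_eval P).comp (PiLp.continuous_ofLp (p := 2) (β := fun _ : Fin d => ℝ))
    convert h1 using 1
    exact funext hP
  have hcontf : Continuous fun h : EuclideanSpace ℝ (Fin d) => Real.exp (-g h) :=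
    Real.continuous_exp.comp hgcont.neg
  -- dominating function
  set n : ℕ := d + 1 with hndef
  set C : ℝ := (1 + R) ^ n + (n.factorial : ℝ) * (2 * R) ^ n with hCdef
  have hbound : ∀ h : EuclideanSpace ℝ (Fin d),
      Real.exp (-g h) ≤ C * (1 + ‖h‖) ^ (-(n : ℝ)) := by
    intro h
    have h1pos : (0:ℝ) < 1 + ‖h‖ := by positivity
    have hpow : (1 + ‖h‖) ^ (-(n : ℝ)) = ((1 + ‖h‖) ^ n)⁻¹ := by
      rw [Real.rpow_neg h1pos.le, Real.rpow_natCast]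
    rw [hpow, ← div_eq_mul_inv, le_div_iff₀ (by positivity)]
    rcases le_or_gt ‖h‖ R with hcase | hcase
    · have h1 : Real.exp (-g h) ≤ 1 := Real.exp_le_one_iff.2 (neg_nonpos.2 (hnonneg h))
      have h2 : (1 + ‖h‖) ^ n ≤ (1 + R) ^ n :=
        pow_le_pow_left₀ h1pos.le (by linarith) n
      have h3 : (0:ℝ) ≤ (n.factorial : ℝ) * (2 * R) ^ n := by positivity
      calc Real.exp (-g h) * (1 + ‖h‖) ^ n ≤ 1 * (1 + R) ^ n :=
            mul_le_mul h1 h2 (by positivity) zero_le_one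
        _ ≤ C := by rw [hCdef]; nlinarith
    · have hcase' : R ≤ ‖h‖ := hcase.le
      set x : ℝ := ‖h‖ / R with hxdef
      have hx0 : (0:ℝ) ≤ x := by positivity
      have h1 : Real.exp (-g h) ≤ Real.exp (-x) :=
        Real.exp_le_exp.2 (neg_le_neg (key h hcase'))
      have h2 : (1 + ‖h‖) ^ n ≤ (2 * ‖h‖) ^ n := by
        refine pow_le_pow_left₀ h1pos.le ?_ n
        linarith [le_trans hR1 hcase']
      have hhx : ‖h‖ = R * x := by rw [hxdef]; field_simp
      have h3 : (2 * ‖h‖) ^ n = (2 * R) ^ n * x ^ n := by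
        rw [hhx]; ring
      have h4 : Real.exp (-x) * x ^ n ≤ (n.factorial : ℝ) := by
        have := pow_le_factorial_mul_exp x hx0 n
        have hexp : Real.exp (-x) * Real.exp x = 1 := by
          rw [← Real.exp_add]; simp
        nlinarith [Real.exp_pos (-x), Real.exp_pos x]
      have h5 : (0:ℝ) ≤ (1 + R) ^ n := by positivity
      calc Real.exp (-g h) * (1 + ‖h‖) ^ n
          ≤ Real.exp (-x) * ((2 * R) ^ n * x ^ n) := by
            rw [← h3]
            exact mul_le_mul h1 h2 (by positivity) (Real.exp_pos _).le
        _ = (2 * R) ^ n * (Real.exp (-x) * x ^ n) := by ring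
        _ ≤ (2 * R) ^ n * (n.factorial : ℝ) := by
            refine mul_le_mul_of_nonneg_left h4 (by positivity)
        _ ≤ C := by rw [hCdef]; nlinarith
  have hint : Integrable (fun x : EuclideanSpace ℝ (Fin d) => (1 + ‖x‖) ^ (-(n : ℝ))) := by
    refine integrable_one_add_norm ?_
    rw [finrank_euclideanSpace_fin, hndef]
    push_cast
    linarith
  refine (hint.const_mul C).mono' hcontf.aestronglyMeasurable ?_
  refine Filter.Eventually.of_forall fun h => ?_
  rw [Real.norm_eq_abs, abs_of_pos (Real.exp_pos _)]
  exact hbound h
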